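/- Let $1 < p < \infty$ and let $J : \mathbb{R}^n \to \mathbb{R}$, $J(v) = \frac{\lambda}{p}|v|^p$ with $\lambda \ge 0$. Suppose $v_k \rightharpoonup v$ and $\psi_k := \lambda|v_k|^{p-2}v_k \rightharpoonup \chi$ weakly in $L^p$ resp. $L^{p'}$ on a finite measure space, and $\limsup_k \int \psi_k \cdot v_k \le \int \chi \cdot v$. Then $\chi = \lambda |v|^{p-2} v$ almost everywhere. -/

import Mathlib

open MeasureTheory Filter Topology
open scoped ENNReal NNReal

set_option linter.unusedSectionVars false
set_option maxHeartbeats 1000000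

variable {Ω : Type*} [MeasurableSpace Ω]

/-- `u k ⇀ ul` weakly in `L^r(Ω; ℝⁿ)` (pairings against the conjugate space
`L^{r'}`, `r' = r/(r-1)`, converge). -/
def WeakLrTendsto {n : ℕ} (μ : Measure Ω) (r : ℝ)
    (u : ℕ → Ω → EuclideanSpace ℝ (Fin n)) (ul : Ω → EuclideanSpace ℝ (Fin n)) : Prop :=
  ∀ φ : Ω → EuclideanSpace ℝ (Fin n), MemLp φ (ENNReal.ofReal (r / (r - 1))) μ →
    Tendsto (fun k => ∫ x, (inner ℝ (u k x) (φ x) : ℝ) ∂μ) atTop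
      (nhds (∫ x, (inner ℝ (ul x) (φ x) : ℝ) ∂μ))

noncomputable section MintyHelpers

variable {F : Type*} [NormedAddCommGroup F] [InnerProductSpace ℝ F]

/-- the operator `Ψ a = lam • (‖a‖^(p-2) • a)` -/
def mintyPsi (p lam : ℝ) (a : F) : F := lam • ((‖a‖ ^ (p - 2)) • a)

variable {p lam : ℝ}

lemma minty_g_norm (hp : 1 < p) (a : F) :
    ‖(‖a‖ ^ (p - 2)) • a‖ = ‖a‖ ^ (p - 1) := by
  rcases eq_or_ne a 0 with rfl | ha
  · simp [Real.zero_rpow (by linarith : p - 1 ≠ 0)]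
  · have hn : (0:ℝ) < ‖a‖ := norm_pos_iff.mpr ha
    rw [norm_smul, Real.norm_eq_abs, abs_of_nonneg (Real.rpow_nonneg (norm_nonneg a) _),
      ← Real.rpow_add_one hn.ne' (p-2)]
    ring_nf

lemma mintyPsi_norm (hp : 1 < p) (hlam : 0 ≤ lam) (a : F) :
    ‖mintyPsi p lam a‖ = lam * ‖a‖ ^ (p - 1) := by
  rw [mintyPsi, norm_smul, Real.norm_eq_abs, abs_of_nonneg hlam, minty_g_norm hp]

lemma mintyPsi_inner_self (hp : 1 < p) (a : F) :
    (inner ℝ (mintyPsi p lam a) a : ℝ) = lam * ‖a‖ ^ p := by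
  rcases eq_or_ne a 0 with rfl | ha
  · simp [mintyPsi, Real.zero_rpow (by linarith : p ≠ 0)]
  · have hn : (0:ℝ) < ‖a‖ := norm_pos_iff.mpr ha
    rw [mintyPsi, real_inner_smul_left, real_inner_smul_left, real_inner_self_eq_norm_sq]
    rw [show (‖a‖ ^ 2 : ℝ) = ‖a‖ ^ ((2:ℕ):ℝ) by rw [Real.rpow_natCast]]
    rw [← Real.rpow_add hn]
    norm_num

lemma mintyPsi_monotone (hp : 1 < p) (hlam : 0 ≤ lam) (a b : F) :
    0 ≤ (inner ℝ (mintyPsi p lam a - mintyPsi p lam b) (a - b) : ℝ) := by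
  have h1 : (inner ℝ (mintyPsi p lam a) b : ℝ) ≤ (lam * ‖a‖ ^ (p-1)) * ‖b‖ := by
    calc (inner ℝ (mintyPsi p lam a) b : ℝ) ≤ ‖mintyPsi p lam a‖ * ‖b‖ := real_inner_le_norm _ _
    _ = (lam * ‖a‖ ^ (p-1)) * ‖b‖ := by rw [mintyPsi_norm hp hlam]
  have h2 : (inner ℝ (mintyPsi p lam b) a : ℝ) ≤ (lam * ‖b‖ ^ (p-1)) * ‖a‖ := by
    calc (inner ℝ (mintyPsi p lam b) a : ℝ) ≤ ‖mintyPsi p lam b‖ * ‖a‖ := real_inner_le_norm _ _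
    _ = (lam * ‖b‖ ^ (p-1)) * ‖a‖ := by rw [mintyPsi_norm hp hlam]
  have h3 : (inner ℝ (mintyPsi p lam a) a : ℝ) = lam * ‖a‖ ^ p := mintyPsi_inner_self hp a
  have h4 : (inner ℝ (mintyPsi p lam b) b : ℝ) = lam * ‖b‖ ^ p := mintyPsi_inner_self hp b
  have hae : (‖a‖:ℝ) ^ p = ‖a‖ ^ (p-1) * ‖a‖ := by
    rcases eq_or_ne a 0 with rfl | ha
    · simp [Real.zero_rpow (by linarith : p ≠ 0), Real.zero_rpow (by linarith : p - 1 ≠ 0)]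
    · have hn : (0:ℝ) < ‖a‖ := norm_pos_iff.mpr ha
      rw [← Real.rpow_add_one hn.ne']; ring_nf
  have hbe : (‖b‖:ℝ) ^ p = ‖b‖ ^ (p-1) * ‖b‖ := by
    rcases eq_or_ne b 0 with rfl | hb
    · simp [Real.zero_rpow (by linarith : p ≠ 0), Real.zero_rpow (by linarith : p - 1 ≠ 0)]
    · have hn : (0:ℝ) < ‖b‖ := norm_pos_iff.mpr hb
      rw [← Real.rpow_add_one hn.ne']; ring_nf
  have key : 0 ≤ (‖a‖ ^ (p-1) - ‖b‖ ^ (p-1)) * (‖a‖ - ‖b‖) := by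
    rcases le_total ‖a‖ ‖b‖ with h | h
    · have : (‖a‖:ℝ) ^ (p-1) ≤ ‖b‖ ^ (p-1) :=
        Real.rpow_le_rpow (norm_nonneg a) h (by linarith)
      nlinarith
    · have : (‖b‖:ℝ) ^ (p-1) ≤ ‖a‖ ^ (p-1) :=
        Real.rpow_le_rpow (norm_nonneg b) h (by linarith)
      nlinarith
  rw [inner_sub_left, inner_sub_right, inner_sub_right]
  nlinarith [mul_nonneg hlam key]

lemma mintyPsi_continuous (hp : 1 < p) : Continuous (fun a : F => mintyPsi p lam a) := by
  have hg : Continuous (fun a : F => (‖a‖ ^ (p - 2)) • a) := by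
    rw [continuous_iff_continuousAt]
    intro x
    rcases eq_or_ne x 0 with rfl | hx
    · have h1 : ContinuousAt (fun y : ℝ => y ^ (p-1)) 0 :=
        Real.continuousAt_rpow_const 0 (p-1) (Or.inr (by linarith))
      have h2 : Tendsto (fun a : F => ‖a‖ ^ (p-1)) (𝓝 0) (𝓝 0) := by
        have ht := h1.tendsto
        rw [Real.zero_rpow (by linarith : p - 1 ≠ 0)] at ht
        exact ht.comp (by simpa using continuous_norm.tendsto (0:F))
      have h3 : Tendsto (fun a : F => (‖a‖ ^ (p - 2)) • a) (𝓝 0) (𝓝 0) :=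
        squeeze_zero_norm (fun a => (minty_g_norm hp a).le) h2
      have h0 : ((‖(0:F)‖ ^ (p - 2)) • (0:F)) = 0 := smul_zero _
      rw [ContinuousAt, h0]
      exact h3
    · exact (((Real.continuousAt_rpow_const _ _ (Or.inl (norm_ne_zero_iff.mpr hx))).comp
        continuous_norm.continuousAt).smul continuousAt_id)
  exact continuous_const.smul hg

variable {μ : MeasureTheory.Measure Ω}

lemma minty_one_div_eq {p q : ℝ} (hpq : p.HolderConjugate q) :
    (1:ℝ≥0∞)/1 = 1/(ENNReal.ofReal p) + 1/(ENNReal.ofReal q) := by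
  simp only [one_div]
  rw [hpq.inv_add_inv_ennreal]
  simp

lemma minty_holder_memL1 {f g : Ω → F} {p q : ℝ} (hpq : p.HolderConjugate q)
    (hf : MemLp f (ENNReal.ofReal p) μ) (hg : MemLp g (ENNReal.ofReal q) μ) :
    MemLp (fun x => (inner ℝ (f x) (g x) : ℝ)) 1 μ := by
  have hs : eLpNorm (fun x => (inner ℝ (f x) (g x) : ℝ)) 1 μ ≤
      eLpNorm f (ENNReal.ofReal p) μ * eLpNorm g (ENNReal.ofReal q) μ := by
    haveI := hpq.ennrealOfReal
    simpa using eLpNorm_le_eLpNorm_mul_eLpNorm'_of_norm hf.1 hg.1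
      (fun a b => (inner ℝ a b : ℝ)) 1
      (Eventually.of_forall fun x => by simpa using norm_inner_le_norm (𝕜 := ℝ) (f x) (g x))
  exact ⟨hf.1.inner hg.1, hs.trans_lt (ENNReal.mul_lt_top hf.2 hg.2)⟩

lemma minty_integrable_inner {f g : Ω → F} {p q : ℝ} (hpq : p.HolderConjugate q)
    (hf : MemLp f (ENNReal.ofReal p) μ) (hg : MemLp g (ENNReal.ofReal q) μ) :
    Integrable (fun x => (inner ℝ (f x) (g x) : ℝ)) μ :=
  memLp_one_iff_integrable.mp (minty_holder_memL1 hpq hf hg)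

lemma minty_norm_integral_inner_le {f g : Ω → F} {p q : ℝ} (hpq : p.HolderConjugate q)
    (hf : MemLp f (ENNReal.ofReal p) μ) (hg : MemLp g (ENNReal.ofReal q) μ) :
    ‖∫ x, (inner ℝ (f x) (g x) : ℝ) ∂μ‖ ≤
      (eLpNorm f (ENNReal.ofReal p) μ).toReal * (eLpNorm g (ENNReal.ofReal q) μ).toReal := by
  have hs : eLpNorm (fun x => (inner ℝ (f x) (g x) : ℝ)) 1 μ ≤
      eLpNorm f (ENNReal.ofReal p) μ * eLpNorm g (ENNReal.ofReal q) μ := by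
    haveI := hpq.ennrealOfReal
    simpa using eLpNorm_le_eLpNorm_mul_eLpNorm'_of_norm hf.1 hg.1
      (fun a b => (inner ℝ a b : ℝ)) 1
      (Eventually.of_forall fun x => by simpa using norm_inner_le_norm (𝕜 := ℝ) (f x) (g x))
  calc ‖∫ x, (inner ℝ (f x) (g x) : ℝ) ∂μ‖
      ≤ ∫ x, ‖(inner ℝ (f x) (g x) : ℝ)‖ ∂μ := norm_integral_le_integral_norm _
    _ = (∫⁻ x, ‖(inner ℝ (f x) (g x) : ℝ)‖ₑ ∂μ).toReal :=
        integral_norm_eq_lintegral_enorm (hf.1.inner hg.1)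
    _ = (eLpNorm (fun x => (inner ℝ (f x) (g x) : ℝ)) 1 μ).toReal := by
        rw [eLpNorm_one_eq_lintegral_enorm]
    _ ≤ ((eLpNorm f (ENNReal.ofReal p) μ) * (eLpNorm g (ENNReal.ofReal q) μ)).toReal :=
        ENNReal.toReal_mono (ENNReal.mul_ne_top hf.2.ne hg.2.ne) hs
    _ = _ := ENNReal.toReal_mul

lemma minty_conj_exponent (hp : 1 < p) : p.HolderConjugate (p/(p-1)) :=
  Real.HolderConjugate.conjExponent hp

lemma minty_q_div_eq (hp : 1 < p) : (p/(p-1)) / ((p/(p-1)) - 1) = p := by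
  have h1 : p - 1 ≠ 0 := by linarith
  field_simp
  ring

lemma minty_memLp_rpow (hp : 1 < p) {w : Ω → F} (hw : MemLp w (ENNReal.ofReal p) μ) :
    MemLp (fun x => ‖w x‖ ^ (p-1)) (ENNReal.ofReal (p/(p-1))) μ := by
  have h1 := hw.norm_rpow_div (ENNReal.ofReal (p-1))
  rw [ENNReal.toReal_ofReal (by linarith : (0:ℝ) ≤ p - 1)] at h1
  rwa [← ENNReal.ofReal_div_of_pos (by linarith : (0:ℝ) < p - 1)] at h1

lemma mintyPsi_memLp (hp : 1 < p) (hlam : 0 ≤ lam) {w : Ω → F}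
    (hw : MemLp w (ENNReal.ofReal p) μ) :
    MemLp (fun x => mintyPsi p lam (w x)) (ENNReal.ofReal (p/(p-1))) μ := by
  refine (minty_memLp_rpow hp hw).of_le_mul (c := lam)
    ((mintyPsi_continuous hp).comp_aestronglyMeasurable hw.1) (Eventually.of_forall fun x => ?_)
  rw [mintyPsi_norm hp hlam, Real.norm_of_nonneg (Real.rpow_nonneg (norm_nonneg _) _)]

noncomputable def mintyPair {p q : ℝ} (hpq : p.HolderConjugate q)
    {ψf : Ω → F} (hψ : MemLp ψf (ENNReal.ofReal q) μ)
    [Fact (1 ≤ ENNReal.ofReal p)] :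
    Lp F (ENNReal.ofReal p) μ →L[ℝ] ℝ :=
  LinearMap.mkContinuous
    { toFun := fun φ => ∫ x, (inner ℝ (ψf x) (φ x) : ℝ) ∂μ
      map_add' := by
        intro φ ζ
        have e1 : (fun x => (inner ℝ (ψf x) ((φ + ζ : Lp F (ENNReal.ofReal p) μ) x) : ℝ))
            =ᵐ[μ] fun x => (inner ℝ (ψf x) (φ x) : ℝ) + (inner ℝ (ψf x) (ζ x) : ℝ) :=
          (Lp.coeFn_add φ ζ).mono (fun x hx => by
            simp only [hx, Pi.add_apply, inner_add_right])
        rw [integral_congr_ae e1, integral_add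
          (minty_integrable_inner hpq.symm hψ (Lp.memLp φ))
          (minty_integrable_inner hpq.symm hψ (Lp.memLp ζ))]
      map_smul' := by
        intro a φ
        have e1 : (fun x => (inner ℝ (ψf x) ((a • φ : Lp F (ENNReal.ofReal p) μ) x) : ℝ))
            =ᵐ[μ] fun x => a * (inner ℝ (ψf x) (φ x) : ℝ) :=
          (Lp.coeFn_smul a φ).mono (fun x hx => by
            simp only [hx, Pi.smul_apply, inner_smul_right, smul_eq_mul])
        simp only [RingHom.id_apply, smul_eq_mul]
        rw [integral_congr_ae e1, integral_const_mul] }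
    ((eLpNorm ψf (ENNReal.ofReal q) μ).toReal)
    (fun φ => by
      simp only [LinearMap.coe_mk, AddHom.coe_mk]
      calc ‖∫ x, (inner ℝ (ψf x) (φ x) : ℝ) ∂μ‖
          ≤ (eLpNorm ψf (ENNReal.ofReal q) μ).toReal *
            (eLpNorm (φ : Ω → F) (ENNReal.ofReal p) μ).toReal :=
            minty_norm_integral_inner_le hpq.symm hψ (Lp.memLp φ)
        _ = (eLpNorm ψf (ENNReal.ofReal q) μ).toReal * ‖φ‖ := by rw [Lp.norm_def])

lemma minty_uniform_bound [CompleteSpace F] {p q : ℝ} (hpq : p.HolderConjugate q)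
    {ψ : ℕ → Ω → F} (hψ : ∀ k, MemLp (ψ k) (ENNReal.ofReal q) μ)
    (hconv : ∀ φ : Ω → F, MemLp φ (ENNReal.ofReal p) μ →
      ∃ L, Tendsto (fun k => ∫ x, (inner ℝ (ψ k x) (φ x) : ℝ) ∂μ) atTop (nhds L)) :
    ∃ M : ℝ, 0 ≤ M ∧ ∀ k, ∀ φ : Ω → F, MemLp φ (ENNReal.ofReal p) μ →
      ‖∫ x, (inner ℝ (ψ k x) (φ x) : ℝ) ∂μ‖ ≤
        M * (eLpNorm φ (ENNReal.ofReal p) μ).toReal := by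
  haveI : Fact (1 ≤ ENNReal.ofReal p) := ⟨ENNReal.one_le_ofReal.mpr hpq.lt.le⟩
  set S : ℕ → (Lp F (ENNReal.ofReal p) μ →L[ℝ] ℝ) := fun k => mintyPair hpq (hψ k) with hS
  have hb : ∀ φLp : Lp F (ENNReal.ofReal p) μ, ∃ C, ∀ k, ‖S k φLp‖ ≤ C := by
    intro φLp
    obtain ⟨L, hL⟩ := hconv _ (Lp.memLp φLp)
    have h2 : Tendsto (fun k => ‖S k φLp‖) atTop (nhds ‖L‖) := hL.norm
    obtain ⟨C, hC⟩ := h2.bddAbove_range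
    exact ⟨C, fun k => hC (Set.mem_range_self k)⟩
  obtain ⟨M, hM⟩ := banach_steinhaus hb
  refine ⟨max M 0, le_max_right _ _, fun k φ hφ => ?_⟩
  have h1 : S k (hφ.toLp φ) = ∫ x, (inner ℝ (ψ k x) (φ x) : ℝ) ∂μ :=
    integral_congr_ae ((hφ.coeFn_toLp).mono fun x hx => by simp only [hx])
  calc ‖∫ x, (inner ℝ (ψ k x) (φ x) : ℝ) ∂μ‖ = ‖S k (hφ.toLp φ)‖ := by rw [h1]
    _ ≤ ‖S k‖ * ‖hφ.toLp φ‖ := (S k).le_opNorm _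
    _ ≤ max M 0 * (eLpNorm φ (ENNReal.ofReal p) μ).toReal := by
        rw [Lp.norm_toLp]
        exact mul_le_mul ((hM k).trans (le_max_left _ _)) le_rfl ENNReal.toReal_nonneg
          (le_max_right _ _)

lemma minty_A_bound (hp : 1 < p) (hlam : 0 ≤ lam) (M : ℝ) (hM0 : 0 ≤ M)
    (A N : ℕ → ℝ) (hN : ∀ k, 0 ≤ N k) (hA : ∀ k, A k = lam * (N k) ^ p)
    (hb : ∀ k, A k ≤ M * N k) :
    ∃ M₂, ∀ k, A k ≤ M₂ := by
  rcases eq_or_lt_of_le hlam with h0 | hlam'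
  · exact ⟨0, fun k => by rw [hA, ← h0]; simp⟩
  refine ⟨max lam (M * (M/lam) ^ (1/(p-1))), fun k => ?_⟩
  rcases le_total (N k) 1 with h1 | h1
  · refine le_trans ?_ (le_max_left _ _)
    rw [hA]
    have h2 : (N k) ^ p ≤ 1 := Real.rpow_le_one (hN k) h1 (by linarith)
    nlinarith
  · refine le_trans ?_ (le_max_right _ _)
    have hNpos : (0:ℝ) < N k := lt_of_lt_of_le one_pos h1
    have hsplit : (N k)^p = (N k)^(p-1) * N k := by
      rw [← Real.rpow_add_one hNpos.ne']; ring_nf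
    have h2 : lam * ((N k)^(p-1) * N k) ≤ M * N k := by rw [← hsplit, ← hA]; exact hb k
    have h3 : (N k)^(p-1) ≤ M / lam := by
      rw [le_div_iff₀ hlam']
      have h2' : (lam * (N k)^(p-1)) * N k ≤ M * N k := by linarith [h2]
      have := le_of_mul_le_mul_right h2' hNpos
      linarith
    have h4 : N k ≤ (M/lam) ^ (1/(p-1)) := by
      have h5 := Real.rpow_le_rpow (Real.rpow_nonneg (hN k) _) h3
        (le_of_lt (by apply one_div_pos.mpr; linarith : (0:ℝ) < 1/(p-1)))
      rwa [← Real.rpow_mul (hN k), mul_one_div, div_self (by linarith : p - 1 ≠ 0),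
        Real.rpow_one] at h5
    calc A k ≤ M * N k := hb k
      _ ≤ M * ((M/lam)^(1/(p-1))) := by nlinarith [h4, hM0]

end MintyHelpers

/-- Minty–Browder monotonicity trick for the operator `v ↦ λ|v|^{p-2}v`
(`λ ≥ 0` constant): if `v_k ⇀ v` in `L^p`, `ψ_k := λ|v_k|^{p-2}v_k ⇀ χ` in `L^{p'}`,
and `limsup ∫ ψ_k ⋅ v_k ≤ ∫ χ ⋅ v`, then `χ = λ|v|^{p-2}v` a.e. -/
theorem stmt18 (n : ℕ) (p lam : ℝ) (hp : 1 < p) (hlam : 0 ≤ lam)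
    (μ : Measure Ω) [IsFiniteMeasure μ]
    (v : ℕ → Ω → EuclideanSpace ℝ (Fin n)) (vlim : Ω → EuclideanSpace ℝ (Fin n))
    (hvk : ∀ k, MemLp (v k) (ENNReal.ofReal p) μ) (hvl : MemLp vlim (ENNReal.ofReal p) μ)
    (hvweak : WeakLrTendsto μ p v vlim)
    (χ : Ω → EuclideanSpace ℝ (Fin n)) (hχ : MemLp χ (ENNReal.ofReal (p / (p - 1))) μ)
    (hψweak : WeakLrTendsto μ (p / (p - 1))
      (fun k x => lam • (‖v k x‖ ^ (p - 2) • v k x)) χ)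
    (hlimsup : limsup
        (fun k => ∫ x, (inner ℝ (lam • (‖v k x‖ ^ (p - 2) • v k x)) (v k x) : ℝ) ∂μ)
        atTop ≤ ∫ x, (inner ℝ (χ x) (vlim x) : ℝ) ∂μ) :
    ∀ᵐ x ∂μ, χ x = lam • (‖vlim x‖ ^ (p - 2) • vlim x) := by
  classical
  have hps : (0:ℝ) < p - 1 := by linarith
  have hpq : p.HolderConjugate (p/(p-1)) := minty_conj_exponent hp
  set ψ : ℕ → Ω → EuclideanSpace ℝ (Fin n) := fun k x => mintyPsi p lam (v k x) with hψdef
  have hψk : ∀ k, MemLp (ψ k) (ENNReal.ofReal (p/(p-1))) μ :=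
    fun k => mintyPsi_memLp hp hlam (hvk k)
  -- weak convergence restated
  have hψweak' : ∀ φ : Ω → EuclideanSpace ℝ (Fin n), MemLp φ (ENNReal.ofReal p) μ →
      Tendsto (fun k => ∫ x, (inner ℝ (ψ k x) (φ x) : ℝ) ∂μ) atTop
        (nhds (∫ x, (inner ℝ (χ x) (φ x) : ℝ) ∂μ)) := by
    intro φ hφ
    exact hψweak φ (by rw [minty_q_div_eq hp]; exact hφ)
  -- limsup hypothesis restated
  have hlimsup' : limsup (fun k => ∫ x, (inner ℝ (ψ k x) (v k x) : ℝ) ∂μ) atTop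
      ≤ ∫ x, (inner ℝ (χ x) (vlim x) : ℝ) ∂μ := hlimsup
  set A : ℕ → ℝ := fun k => ∫ x, (inner ℝ (ψ k x) (v k x) : ℝ) ∂μ with hAdef
  -- uniform boundedness of A
  have hconv : ∀ φ : Ω → EuclideanSpace ℝ (Fin n), MemLp φ (ENNReal.ofReal p) μ →
      ∃ L, Tendsto (fun k => ∫ x, (inner ℝ (ψ k x) (φ x) : ℝ) ∂μ) atTop (nhds L) :=
    fun φ hφ => ⟨_, hψweak' φ hφ⟩
  obtain ⟨M, hM0, hMb⟩ := minty_uniform_bound hpq hψk hconv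
  set N : ℕ → ℝ := fun k => (eLpNorm (v k) (ENNReal.ofReal p) μ).toReal with hNdef
  have hNn : ∀ k, 0 ≤ N k := fun k => ENNReal.toReal_nonneg
  have hAeq : ∀ k, A k = lam * (N k) ^ p := by
    intro k
    have h1 : ∀ x, (inner ℝ (ψ k x) (v k x) : ℝ) = lam * ‖v k x‖ ^ p :=
      fun x => mintyPsi_inner_self hp _
    have h2 : A k = ∫ x, lam * ‖v k x‖ ^ p ∂μ :=
      integral_congr_ae (Eventually.of_forall h1)
    rw [h2, integral_const_mul]
    congr 1
    -- ∫ ‖v k x‖ ^ p = (N k) ^ p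
    have h3 := (hvk k).eLpNorm_eq_integral_rpow_norm
      (by simp [ENNReal.ofReal_eq_zero]; linarith : (ENNReal.ofReal p) ≠ 0)
      (by simp : (ENNReal.ofReal p) ≠ ∞)
    have htr : (ENNReal.ofReal p).toReal = p := ENNReal.toReal_ofReal (by linarith)
    rw [htr] at h3
    have hIn : 0 ≤ ∫ x, ‖v k x‖ ^ p ∂μ :=
      integral_nonneg fun x => Real.rpow_nonneg (norm_nonneg _) _
    have h4 : N k = (∫ x, ‖v k x‖ ^ p ∂μ) ^ p⁻¹ := by
      rw [hNdef]; simp only []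
      rw [h3, ENNReal.toReal_ofReal (by positivity)]
    rw [h4, ← Real.rpow_mul hIn, inv_mul_cancel₀ (by linarith : p ≠ 0), Real.rpow_one]
  have hAb : ∀ k, A k ≤ M * N k := by
    intro k
    calc A k ≤ ‖A k‖ := le_abs_self _
      _ ≤ M * N k := hMb k (v k) (hvk k)
  obtain ⟨M₂, hM₂⟩ := minty_A_bound hp hlam M hM0 A N hNn hAeq hAb
  have hAbdd : IsBoundedUnder (· ≤ ·) atTop A :=
    ⟨M₂, eventually_map.mpr (Eventually.of_forall hM₂)⟩
  -- the key Minty inequality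
  have key : ∀ w : Ω → EuclideanSpace ℝ (Fin n), MemLp w (ENNReal.ofReal p) μ →
      0 ≤ ∫ x, (inner ℝ (χ x - mintyPsi p lam (w x)) (vlim x - w x) : ℝ) ∂μ := by
    intro w hw
    set Ψw : Ω → EuclideanSpace ℝ (Fin n) := fun x => mintyPsi p lam (w x) with hΨwdef
    have hΨw : MemLp Ψw (ENNReal.ofReal (p/(p-1))) μ := mintyPsi_memLp hp hlam hw
    -- integrabilities
    have iχv : Integrable (fun x => (inner ℝ (χ x) (vlim x) : ℝ)) μ :=
      minty_integrable_inner hpq.symm hχ hvl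
    have iχw : Integrable (fun x => (inner ℝ (χ x) (w x) : ℝ)) μ :=
      minty_integrable_inner hpq.symm hχ hw
    have iΨv : Integrable (fun x => (inner ℝ (vlim x) (Ψw x) : ℝ)) μ :=
      minty_integrable_inner hpq hvl hΨw
    have iΨw : Integrable (fun x => (inner ℝ (Ψw x) (w x) : ℝ)) μ :=
      minty_integrable_inner hpq.symm hΨw hw
    -- limits
    have t1 : Tendsto (fun k => ∫ x, (inner ℝ (ψ k x) (w x) : ℝ) ∂μ) atTop
        (nhds (∫ x, (inner ℝ (χ x) (w x) : ℝ) ∂μ)) := hψweak' w hw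
    have t2 : Tendsto (fun k => ∫ x, (inner ℝ (v k x) (Ψw x) : ℝ) ∂μ) atTop
        (nhds (∫ x, (inner ℝ (vlim x) (Ψw x) : ℝ) ∂μ)) := hvweak Ψw hΨw
    set B : ℕ → ℝ := fun k => (∫ x, (inner ℝ (ψ k x) (w x) : ℝ) ∂μ) +
      (∫ x, (inner ℝ (v k x) (Ψw x) : ℝ) ∂μ) - ∫ x, (inner ℝ (Ψw x) (w x) : ℝ) ∂μ with hBdef
    have hBA : ∀ k, B k ≤ A k := by
      intro k
      have iψv : Integrable (fun x => (inner ℝ (ψ k x) (v k x) : ℝ)) μ :=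
        minty_integrable_inner hpq.symm (hψk k) (hvk k)
      have iψw : Integrable (fun x => (inner ℝ (ψ k x) (w x) : ℝ)) μ :=
        minty_integrable_inner hpq.symm (hψk k) hw
      have iΨvk : Integrable (fun x => (inner ℝ (v k x) (Ψw x) : ℝ)) μ :=
        minty_integrable_inner hpq (hvk k) hΨw
      have ptwise : ∀ x, (0:ℝ) ≤ inner ℝ (ψ k x - Ψw x) (v k x - w x) :=
        fun x => mintyPsi_monotone hp hlam _ _
      have hexp : ∀ x, (inner ℝ (ψ k x - Ψw x) (v k x - w x) : ℝ) =
          (inner ℝ (ψ k x) (v k x) : ℝ) - (inner ℝ (ψ k x) (w x) : ℝ)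
            - (inner ℝ (v k x) (Ψw x) : ℝ) + (inner ℝ (Ψw x) (w x) : ℝ) := by
        intro x
        rw [inner_sub_left, inner_sub_right, inner_sub_right,
          real_inner_comm (Ψw x) (v k x)]
        ring
      have hint : ∫ x, (inner ℝ (ψ k x - Ψw x) (v k x - w x) : ℝ) ∂μ = A k - B k := by
        rw [integral_congr_ae (Eventually.of_forall hexp)]
        have i12 : Integrable (fun x => (inner ℝ (ψ k x) (v k x) : ℝ)
            - (inner ℝ (ψ k x) (w x) : ℝ)) μ := iψv.sub iψw
        have i123 : Integrable (fun x => (inner ℝ (ψ k x) (v k x) : ℝ)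
            - (inner ℝ (ψ k x) (w x) : ℝ) - (inner ℝ (v k x) (Ψw x) : ℝ)) μ := i12.sub iΨvk
        rw [integral_add i123 iΨw, integral_sub i12 iΨvk, integral_sub iψv iψw]
        rw [hAdef, hBdef]
        ring
      have h0 : 0 ≤ ∫ x, (inner ℝ (ψ k x - Ψw x) (v k x - w x) : ℝ) ∂μ :=
        integral_nonneg ptwise
      linarith [hint ▸ h0]
    have tB : Tendsto B atTop (nhds ((∫ x, (inner ℝ (χ x) (w x) : ℝ) ∂μ) +
        (∫ x, (inner ℝ (vlim x) (Ψw x) : ℝ) ∂μ) - ∫ x, (inner ℝ (Ψw x) (w x) : ℝ) ∂μ)) :=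
      (t1.add t2).sub tendsto_const_nhds
    have hBle : (∫ x, (inner ℝ (χ x) (w x) : ℝ) ∂μ) +
        (∫ x, (inner ℝ (vlim x) (Ψw x) : ℝ) ∂μ) - (∫ x, (inner ℝ (Ψw x) (w x) : ℝ) ∂μ)
        ≤ ∫ x, (inner ℝ (χ x) (vlim x) : ℝ) ∂μ := by
      have h1 : limsup B atTop = _ := tB.limsup_eq
      have h2 : limsup B atTop ≤ limsup A atTop :=
        limsup_le_limsup (Eventually.of_forall hBA)
          (tB.isBoundedUnder_ge.isCoboundedUnder_le) hAbdd
      rw [h1] at h2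
      exact h2.trans hlimsup'
    have hexp2 : ∀ x, (inner ℝ (χ x - Ψw x) (vlim x - w x) : ℝ) =
        (inner ℝ (χ x) (vlim x) : ℝ) - (inner ℝ (χ x) (w x) : ℝ)
          - (inner ℝ (vlim x) (Ψw x) : ℝ) + (inner ℝ (Ψw x) (w x) : ℝ) := by
      intro x
      rw [inner_sub_left, inner_sub_right, inner_sub_right,
        real_inner_comm (Ψw x) (vlim x)]
      ring
    have hint2 : ∫ x, (inner ℝ (χ x - Ψw x) (vlim x - w x) : ℝ) ∂μ =
        (∫ x, (inner ℝ (χ x) (vlim x) : ℝ) ∂μ) - (∫ x, (inner ℝ (χ x) (w x) : ℝ) ∂μ)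
          - (∫ x, (inner ℝ (vlim x) (Ψw x) : ℝ) ∂μ) + ∫ x, (inner ℝ (Ψw x) (w x) : ℝ) ∂μ := by
      rw [integral_congr_ae (Eventually.of_forall hexp2)]
      have i12 : Integrable (fun x => (inner ℝ (χ x) (vlim x) : ℝ)
          - (inner ℝ (χ x) (w x) : ℝ)) μ := iχv.sub iχw
      have i123 : Integrable (fun x => (inner ℝ (χ x) (vlim x) : ℝ)
          - (inner ℝ (χ x) (w x) : ℝ) - (inner ℝ (vlim x) (Ψw x) : ℝ)) μ := i12.sub iΨv
      rw [integral_add i123 iΨw, integral_sub i12 iΨv, integral_sub iχv iχw]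
    rw [hint2]
    linarith
  -- the localization test function
  set h : Ω → EuclideanSpace ℝ (Fin n) := fun x => χ x - mintyPsi p lam (vlim x) with hhdef
  have hh : MemLp h (ENNReal.ofReal (p/(p-1))) μ := hχ.sub (mintyPsi_memLp hp hlam hvl)
  set φ : Ω → EuclideanSpace ℝ (Fin n) := fun x => (1 + ‖h x‖)⁻¹ • h x with hφdef
  have hcphi : Continuous (fun a : EuclideanSpace ℝ (Fin n) => (1 + ‖a‖)⁻¹ • a) :=
    ((continuous_const.add continuous_norm).inv₀ (fun a => (by positivity : (0:ℝ) < 1 + ‖a‖).ne')).smul continuous_id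
  have hφm : AEStronglyMeasurable φ μ := hcphi.comp_aestronglyMeasurable hh.1
  have hφb : ∀ x, ‖φ x‖ ≤ 1 := by
    intro x
    rw [hφdef]
    simp only []
    rw [norm_smul, Real.norm_eq_abs, abs_of_nonneg (by positivity : (0:ℝ) ≤ (1 + ‖h x‖)⁻¹)]
    rw [inv_mul_le_iff₀ (by positivity), mul_one]
    linarith [norm_nonneg (h x)]
  have hφLp : MemLp φ (ENNReal.ofReal p) μ :=
    MemLp.of_bound hφm 1 (Eventually.of_forall hφb)
  -- the perturbation functional
  set J : ℝ → ℝ := fun c => ∫ x,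
    (inner ℝ (χ x - mintyPsi p lam (vlim x + c • φ x)) (φ x) : ℝ) ∂μ with hJdef
  have hJ0 : J 0 = ∫ x, (inner ℝ (h x) (φ x) : ℝ) ∂μ := by
    have he : ∀ x : Ω, (inner ℝ (χ x - mintyPsi p lam (vlim x + (0:ℝ) • φ x)) (φ x) : ℝ)
        = inner ℝ (h x) (φ x) := fun x => by rw [hhdef]; simp
    exact integral_congr_ae (Eventually.of_forall he)
  -- sign information
  have hsign : ∀ c : ℝ, 0 ≤ -(c * J c) := by
    intro c
    have hwc : MemLp (fun x => vlim x + c • φ x) (ENNReal.ofReal p) μ :=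
      hvl.add (hφLp.const_smul c)
    have hk := key _ hwc
    have he : ∀ x, (inner ℝ (χ x - mintyPsi p lam (vlim x + c • φ x))
        (vlim x - (vlim x + c • φ x)) : ℝ) =
        -(c * (inner ℝ (χ x - mintyPsi p lam (vlim x + c • φ x)) (φ x) : ℝ)) := by
      intro x
      rw [show vlim x - (vlim x + c • φ x) = -(c • φ x) by abel]
      rw [inner_neg_right, real_inner_smul_right]
    rw [integral_congr_ae (Eventually.of_forall he)] at hk
    rw [integral_neg, integral_const_mul] at hk
    exact hk
  -- continuity of J at 0 along sequences via dominated convergence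
  have hQ1 : (1:ℝ≥0∞) ≤ ENNReal.ofReal (p/(p-1)) :=
    ENNReal.one_le_ofReal.mpr hpq.symm.lt.le
  have hbound_mem : MemLp (fun x => ‖(‖vlim x‖ + 1 : ℝ)‖ ^ (p-1)) (ENNReal.ofReal (p/(p-1))) μ :=
    minty_memLp_rpow (F := ℝ) hp (hvl.norm.add (memLp_const 1))
  have hbound_int : Integrable
      (fun x => ‖χ x‖ + lam * ‖(‖vlim x‖ + 1 : ℝ)‖ ^ (p-1)) μ :=
    (hχ.integrable hQ1).norm.add ((hbound_mem.integrable hQ1).const_mul lam)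
  have hJseq : ∀ c : ℕ → ℝ, (∀ m, |c m| ≤ 1) → Tendsto c atTop (nhds 0) →
      Tendsto (fun m => J (c m)) atTop (nhds (J 0)) := by
    intro c hc1 hc0
    rw [hJ0]
    refine tendsto_integral_of_dominated_convergence
      (fun x => ‖χ x‖ + lam * ‖(‖vlim x‖ + 1 : ℝ)‖ ^ (p-1)) ?_ hbound_int ?_ ?_
    · intro m
      exact (hχ.1.sub ((mintyPsi_continuous hp).comp_aestronglyMeasurable
        (hvl.1.add (hφm.const_smul (c m))))).inner hφm
    · intro m
      refine Eventually.of_forall fun x => ?_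
      calc ‖(inner ℝ (χ x - mintyPsi p lam (vlim x + c m • φ x)) (φ x) : ℝ)‖
          ≤ ‖χ x - mintyPsi p lam (vlim x + c m • φ x)‖ * ‖φ x‖ := norm_inner_le_norm _ _
        _ ≤ ‖χ x - mintyPsi p lam (vlim x + c m • φ x)‖ * 1 :=
            mul_le_mul_of_nonneg_left (hφb x) (norm_nonneg _)
        _ = ‖χ x - mintyPsi p lam (vlim x + c m • φ x)‖ := mul_one _
        _ ≤ ‖χ x‖ + ‖mintyPsi p lam (vlim x + c m • φ x)‖ := norm_sub_le _ _
        _ ≤ ‖χ x‖ + lam * ‖(‖vlim x‖ + 1 : ℝ)‖ ^ (p-1) := by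
            refine add_le_add le_rfl ?_
            rw [mintyPsi_norm hp hlam, Real.norm_of_nonneg (by positivity)]
            refine mul_le_mul_of_nonneg_left ?_ hlam
            refine Real.rpow_le_rpow (norm_nonneg _) ?_ (by linarith)
            calc ‖vlim x + c m • φ x‖ ≤ ‖vlim x‖ + ‖c m • φ x‖ := norm_add_le _ _
              _ ≤ ‖vlim x‖ + 1 := by
                  refine add_le_add le_rfl ?_
                  rw [norm_smul, Real.norm_eq_abs]
                  calc |c m| * ‖φ x‖ ≤ 1 * 1 :=
                    mul_le_mul (hc1 m) (hφb x) (norm_nonneg _) zero_le_one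
                  _ = 1 := one_mul 1
    · refine Eventually.of_forall fun x => ?_
      have hcx : Continuous (fun s : ℝ =>
          (inner ℝ (χ x - mintyPsi p lam (vlim x + s • φ x)) (φ x) : ℝ)) := by
        refine Continuous.inner ?_ continuous_const
        exact continuous_const.sub ((mintyPsi_continuous hp).comp
          (continuous_const.add (continuous_id.smul continuous_const)))
      have := (hcx.tendsto 0).comp hc0
      simp only [Function.comp_def, zero_smul, add_zero] at this
      exact this
  -- conclude J 0 = 0
  set tseq : ℕ → ℝ := fun m => ((m:ℝ) + 1)⁻¹ with htdef
  have ht1 : ∀ m, |tseq m| ≤ 1 := by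
    intro m
    rw [htdef]
    simp only []
    rw [abs_of_nonneg (by positivity)]
    rw [inv_le_one_iff₀]
    right
    simp [Nat.cast_nonneg]
  have ht0 : Tendsto tseq atTop (nhds 0) := by
    have := tendsto_one_div_add_atTop_nhds_zero_nat (𝕜 := ℝ)
    simpa [one_div] using this
  have htpos : ∀ m, 0 < tseq m := fun m => by positivity
  have hJ0_nonpos : J 0 ≤ 0 := by
    have := hJseq tseq ht1 ht0
    refine le_of_tendsto this (Eventually.of_forall fun m => ?_)
    have h1 : tseq m * J (tseq m) ≤ 0 := by linarith [hsign (tseq m)]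
    by_contra hcon
    push_neg at hcon
    nlinarith [mul_pos (htpos m) hcon]
  have hJ0_nonneg : 0 ≤ J 0 := by
    have hneg1 : ∀ m, |(-(tseq m))| ≤ 1 := fun m => by rw [abs_neg]; exact ht1 m
    have hneg0 : Tendsto (fun m => -(tseq m)) atTop (nhds 0) := by
      simpa using ht0.neg
    have := hJseq (fun m => -(tseq m)) hneg1 hneg0
    refine ge_of_tendsto this (Eventually.of_forall fun m => ?_)
    have hs := hsign (-(tseq m))
    have h1 : 0 ≤ tseq m * J (-(tseq m)) := by nlinarith [hs]
    by_contra hcon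
    push_neg at hcon
    nlinarith [mul_pos (htpos m) (neg_pos.mpr hcon)]
  have hJ0_eq : (∫ x, (inner ℝ (h x) (φ x) : ℝ) ∂μ) = 0 := by
    rw [← hJ0]; linarith
  -- a.e. conclusion
  have hinner_eq : ∀ x, (inner ℝ (h x) (φ x) : ℝ) = (1 + ‖h x‖)⁻¹ * ‖h x‖ ^ 2 := by
    intro x
    rw [hφdef]
    simp only []
    rw [real_inner_smul_right, real_inner_self_eq_norm_sq]
  have hInt : Integrable (fun x => (1 + ‖h x‖)⁻¹ * ‖h x‖ ^ 2) μ := by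
    have := minty_integrable_inner hpq.symm hh hφLp
    exact this.congr (Eventually.of_forall hinner_eq)
  have hzero : (fun x => (1 + ‖h x‖)⁻¹ * ‖h x‖ ^ 2) =ᵐ[μ] 0 := by
    rw [← integral_eq_zero_iff_of_nonneg_ae (Eventually.of_forall fun x => by positivity) hInt]
    rw [← integral_congr_ae (Eventually.of_forall hinner_eq)]
    exact hJ0_eq
  refine hzero.mono fun x hx => ?_
  have hx' : (1 + ‖h x‖)⁻¹ * ‖h x‖ ^ 2 = 0 := hx
  have hhx : ‖h x‖ = 0 := by
    by_contra hne
    have h1 : (0:ℝ) < ‖h x‖ := lt_of_le_of_ne (norm_nonneg _) (Ne.symm hne)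
    have h2 : (0:ℝ) < (1 + ‖h x‖)⁻¹ := by positivity
    nlinarith [mul_pos h2 (pow_pos h1 2)]
  have : h x = 0 := norm_eq_zero.mp hhx
  have : χ x = mintyPsi p lam (vlim x) := by
    rw [hhdef] at this
    simp only [] at this
    exact sub_eq_zero.mp this
  exact this
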